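/- The m-bonacci word factors as the concatenation of all p-singular words: w_m = z_0 z_1 z_2 ⋯. Equivalently, for every n ≥ 0, the word z_0 z_1 ⋯ z_{n−1} is a prefix of w_m, and the lengths |z_0 z_1 ⋯ z_{n−1}| tend to infinity. -/

import Mathlib

/-- The finite word `u` occurs at position `j` in the infinite word `w`. -/
def OccursAt (u : List ℕ) (w : ℕ → ℕ) (j : ℕ) : Prop :=
  ∀ i < u.length, w (j + i) = u.getD i 0

/-- The finite word `u` is a prefix of the infinite word `w`. -/
def InfPrefix (u : List ℕ) (w : ℕ → ℕ) : Prop :=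
  OccursAt u w 0

/-- The suffix of the infinite word `w` starting at position `j`. -/
def suffixFrom (w : ℕ → ℕ) (j : ℕ) : ℕ → ℕ :=
  fun i => w (j + i)

/-- The finite word `u` is a palindrome. -/
def Pal (u : List ℕ) : Prop := u.reverse = u
/-- The `m`-bonacci morphism `φ_m` on letters:
`φ_m(k) = 0·(k+1)` for `0 ≤ k ≤ m-2`, and `φ_m(m-1) = 0`. -/
def phiL (m a : ℕ) : List ℕ := if a = m - 1 then [0] else [0, a + 1]

/-- The `m`-bonacci morphism applied to a finite word. -/
def phiW (m : ℕ) (u : List ℕ) : List ℕ := u.flatMap (phiL m)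

/-- The iterates `h n = φ_mⁿ(0)`. -/
def hword (m : ℕ) : ℕ → List ℕ
  | 0 => [0]
  | n + 1 => phiW m (hword m n)

/-- The `m`-bonacci word, the infinite fixed point of `φ_m` beginning with `0`
(its `i`-th letter is the `i`-th letter of any sufficiently long iterate `φ_mⁿ(0)`). -/
def mbon (m : ℕ) : ℕ → ℕ := fun i => (hword m (i + 1)).getD i 0

/-- Auxiliary course-of-values construction for the p-singular words:
`zsAux m (k+1) i` gives the correct value of the (index-shifted) p-singular word
`z_{i-1}` for every `i ≤ k`. -/
def zsAux (m : ℕ) : ℕ → ℕ → List ℕ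
  | 0, _ => []
  | k + 1, i =>
    if i < k then zsAux m k i
    else if i = 0 then []
    else if i = 1 then [0]
    else if i ≤ m then
      -- here `i = n+1` with `1 ≤ n ≤ m-1`:
      -- `z_n = z_{n-2} z_{n-3} ⋯ z_1 z_0 · n · z_0 z_1 ⋯ z_{n-3} z_{n-2}`
      (((List.range (i - 2)).map (fun j => zsAux m k (i - 2 - j))).flatten)
        ++ [i - 1]
        ++ (((List.range (i - 2)).map (fun j => zsAux m k (1 + j))).flatten)
    else
      -- here `i = n+1` with `n ≥ m`:
      -- `z_n = z_{n-2} ⋯ z_{n-(m-1)} · z_{n-m} · z_{n-(m+1)} · z_{n-m} · z_{n-(m-1)} ⋯ z_{n-2}`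
      (((List.range (m - 2)).map (fun j => zsAux m k (i - 2 - j))).flatten)
        ++ zsAux m k (i - m) ++ zsAux m k (i - m - 1) ++ zsAux m k (i - m)
        ++ (((List.range (m - 2)).map (fun j => zsAux m k (i - m + 1 + j))).flatten)

/-- The (index-shifted) p-singular words for the `m`-bonacci word:
`zsw m 0 = z₋₁ = ε`, and `zsw m (n+1) = zₙ` for `n ≥ 0`, where
`z₀ = 0`, `zₙ = z_{n-2} z_{n-3} ⋯ z_1 z_0 · n · z_0 z_1 ⋯ z_{n-3} z_{n-2}` for `1 ≤ n ≤ m-1`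
(`n` denoting the single letter `n`), and
`zₙ = z_{n-2} z_{n-3} ⋯ z_{n-(m-1)} z_{n-m} z_{n-(m+1)} z_{n-m} z_{n-(m-1)} ⋯ z_{n-3} z_{n-2}`
for `n ≥ m`. -/
def zsw (m k : ℕ) : List ℕ := zsAux m (k + 1) k


lemma zsAux_stab (m : ℕ) : ∀ k i, i < k → zsAux m k i = zsw m i := by
  intro k
  induction k with
  | zero => intro i h; omega
  | succ k ih =>
    intro i h
    rcases Nat.lt_or_ge i k with h' | h'
    · rw [zsAux]; simp only [if_pos h']; exact ih i h'
    · have : i = k := by omega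
      subst this
      rfl

lemma zsw_zero (m : ℕ) : zsw m 0 = [] := by simp [zsw, zsAux]

lemma zsw_one (m : ℕ) : zsw m 1 = [0] := by simp [zsw, zsAux]

/-- Descending product `zsw a · zsw (a-1) ⋯ zsw (a-r+1)`. -/
def Dw (m r a : ℕ) : List ℕ := ((List.range r).map (fun j => zsw m (a - j))).flatten
/-- Ascending product `zsw a · zsw (a+1) ⋯ zsw (a+r-1)`. -/
def Aw (m r a : ℕ) : List ℕ := ((List.range r).map (fun j => zsw m (a + j))).flatten

lemma Dw_zero (m a : ℕ) : Dw m 0 a = [] := by simp [Dw]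
lemma Aw_zero (m a : ℕ) : Aw m 0 a = [] := by simp [Aw]

lemma Dw_succ_front (m r a : ℕ) : Dw m (r+1) a = zsw m a ++ Dw m r (a-1) := by
  simp only [Dw, List.range_succ_eq_map, List.map_cons, List.map_map, List.flatten_cons,
    Nat.sub_zero]
  congr 1
  congr 1
  apply List.map_congr_left
  intro j _
  simp only [Function.comp]
  congr 1
  omega

lemma Dw_succ_back (m r a : ℕ) : Dw m (r+1) a = Dw m r a ++ zsw m (a - r) := by
  simp [Dw, List.range_succ]

lemma Aw_succ_front (m r a : ℕ) : Aw m (r+1) a = zsw m a ++ Aw m r (a+1) := by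
  simp only [Aw, List.range_succ_eq_map, List.map_cons, List.map_map, List.flatten_cons,
    Nat.add_zero]
  congr 1
  congr 1
  apply List.map_congr_left
  intro j _
  simp only [Function.comp]
  congr 1
  omega

lemma Aw_succ_back (m r a : ℕ) : Aw m (r+1) a = Aw m r a ++ zsw m (a + r) := by
  simp [Aw, List.range_succ]

lemma zsw_small (m i : ℕ) (h2 : 2 ≤ i) (hm : i ≤ m) :
    zsw m i = Dw m (i-2) (i-2) ++ [i-1] ++ Aw m (i-2) 1 := by
  have h0 : ¬ i < i := lt_irrefl i
  have h1 : i ≠ 0 := by omega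
  have h2' : i ≠ 1 := by omega
  rw [zsw, zsAux, if_neg h0, if_neg h1, if_neg h2', if_pos hm]
  congr 1
  · congr 1
    simp only [Dw]
    congr 1
    apply List.map_congr_left
    intro j hj
    simp only [List.mem_range] at hj
    exact zsAux_stab m i (i - 2 - j) (by omega)
  · simp only [Aw]
    congr 1
    apply List.map_congr_left
    intro j hj
    simp only [List.mem_range] at hj
    exact zsAux_stab m i (1 + j) (by omega)

lemma zsw_big (m i : ℕ) (hm : 2 ≤ m) (hi : m + 1 ≤ i) :
    zsw m i = Dw m (m-2) (i-2) ++ zsw m (i-m) ++ zsw m (i-m-1) ++ zsw m (i-m)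
      ++ Aw m (m-2) (i-m+1) := by
  have h0 : ¬ i < i := lt_irrefl i
  have h1 : i ≠ 0 := by omega
  have h2' : i ≠ 1 := by omega
  have h3 : ¬ i ≤ m := by omega
  rw [zsw, zsAux, if_neg h0, if_neg h1, if_neg h2', if_neg h3]
  have hD : ((List.range (m-2)).map (fun j => zsAux m i (i - 2 - j))).flatten
      = Dw m (m-2) (i-2) := by
    simp only [Dw]
    congr 1
    apply List.map_congr_left
    intro j hj
    simp only [List.mem_range] at hj
    exact zsAux_stab m i (i - 2 - j) (by omega)
  have hA : ((List.range (m-2)).map (fun j => zsAux m i (i - m + 1 + j))).flatten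
      = Aw m (m-2) (i-m+1) := by
    simp only [Aw]
    congr 1
    apply List.map_congr_left
    intro j hj
    simp only [List.mem_range] at hj
    exact zsAux_stab m i (i - m + 1 + j) (by omega)
  rw [zsAux_stab m i (i-m) (by omega), zsAux_stab m i (i-m-1) (by omega), hD, hA]

/-- Parity marker: `[0]` for odd index, `[]` for even. -/
def Ew (j : ℕ) : List ℕ := if j % 2 = 1 then [0] else []

lemma Ew_add_two (j : ℕ) : Ew (j + 2) = Ew j := by simp [Ew, Nat.add_mod_right]

lemma Ew_eq_Ew (j k : ℕ) (h : j % 2 = k % 2) : Ew j = Ew k := by simp [Ew, h]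

lemma phiW_nil (m : ℕ) : phiW m [] = [] := rfl
lemma phiW_append (m : ℕ) (u v : List ℕ) : phiW m (u ++ v) = phiW m u ++ phiW m v := by
  simp [phiW]
lemma phiW_singleton (m a : ℕ) : phiW m [a] = phiL m a := by simp [phiW]

/-- ascending telescope -/
lemma Tasc (m B : ℕ)
    (HR : ∀ t ≤ B, phiW m (zsw m t) ++ Ew (t+1) = Ew t ++ zsw m (t+1)) :
    ∀ r a, a + r ≤ B + 1 → phiW m (Aw m r a) ++ Ew (a + r) = Ew a ++ Aw m r (a+1) := by
  intro r
  induction r with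
  | zero => intro a _; simp [Aw_zero, phiW_nil]
  | succ r ih =>
    intro a hb
    rw [Aw_succ_back, Aw_succ_back, phiW_append,
        show a + 1 + r = a + r + 1 by omega,
        show a + (r + 1) = (a + r) + 1 by omega,
        List.append_assoc, HR (a + r) (by omega), ← List.append_assoc,
        ih a (by omega)]
    simp [List.append_assoc]

/-- descending telescope -/
lemma Tdesc (m B : ℕ)
    (HR : ∀ t ≤ B, phiW m (zsw m t) ++ Ew (t+1) = Ew t ++ zsw m (t+1)) :
    ∀ r a, r ≤ a + 1 → a ≤ B →
      phiW m (Dw m r a) ++ Ew (a + 2 - r) = Ew a ++ Dw m r (a+1) := by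
  intro r
  induction r with
  | zero => intro a _ _; simp [Dw_zero, phiW_nil, Ew_add_two]
  | succ r ih =>
    intro a hra haB
    rcases Nat.eq_zero_or_pos r with rfl | hr
    · have h1 : Dw m 1 a = zsw m a := by rw [Dw_succ_front, Dw_zero, List.append_nil]
      have h2 : Dw m 1 (a+1) = zsw m (a+1) := by
        rw [Dw_succ_front, Dw_zero, List.append_nil]
      rw [h1, h2, show a + 2 - 1 = a + 1 by omega]
      exact HR a haB
    · have ha : 1 ≤ a := by omega
      obtain ⟨a', rfl⟩ : ∃ a', a = a' + 1 := ⟨a - 1, by omega⟩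
      rw [Dw_succ_front, phiW_append, show a' + 1 - 1 = a' by omega,
          show a' + 1 + 2 - (r + 1) = a' + 2 - r by omega,
          List.append_assoc, ih a' (by omega) (by omega),
          ← List.append_assoc,
          show Ew a' = Ew (a' + 1 + 1) from (Ew_add_two a').symm,
          HR (a' + 1) (by omega),
          Dw_succ_front m r (a' + 1 + 1), show a' + 1 + 1 - 1 = a' + 1 by omega]
      simp [List.append_assoc]

/-- The key identity: `φ(zₖ₋₁)·E(k+1) = E(k)·zₖ` in shifted indices. -/
lemma Rkey (m : ℕ) (hm : 2 ≤ m) :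
    ∀ j, phiW m (zsw m j) ++ Ew (j+1) = Ew j ++ zsw m (j+1) := by
  intro j
  induction j using Nat.strong_induction_on with
  | _ j IH =>
  have HR : ∀ t ≤ j - 1, phiW m (zsw m t) ++ Ew (t+1) = Ew t ++ zsw m (t+1) := by
    intro t ht
    rcases Nat.eq_zero_or_pos j with rfl | hj
    · interval_cases t
      simp [zsw_zero, zsw_one, phiW_nil, Ew]
    · exact IH t (by omega)
  rcases Nat.lt_or_ge j 2 with h2 | h2
  · -- j = 0 or 1
    interval_cases j
    · simp [zsw_zero, zsw_one, phiW_nil, Ew]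
    · have hz2 : zsw m 2 = [1] := by
        rw [zsw_small m 2 le_rfl hm]
        simp [Dw_zero, Aw_zero]
      have h0 : phiL m 0 = [0, 1] := by
        simp only [phiL]
        rw [if_neg (by omega)]
      rw [zsw_one, hz2, phiW_singleton, h0]
      simp [Ew]
  rcases Nat.lt_or_ge j m with hjm | hjm
  · -- 2 ≤ j ≤ m - 1 : both small
    obtain ⟨q, rfl⟩ : ∃ q, j = q + 2 := ⟨j - 2, by omega⟩
    rw [zsw_small m (q+2) (by omega) (by omega),
        zsw_small m (q+3) (by omega) (by omega),
        show q + 2 - 2 = q by omega, show q + 2 - 1 = q + 1 by omega,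
        show q + 3 - 2 = q + 1 by omega, show q + 3 - 1 = q + 2 by omega,
        phiW_append, phiW_append, phiW_singleton]
    have hphiL : phiL m (q+1) = [0, q+2] := by
      simp only [phiL]
      rw [if_neg (by omega)]
    have hD := Tdesc m (q+1) HR q q (by omega) (by omega)
    rw [show q + 2 - q = 2 by omega, show Ew 2 = [] by simp [Ew],
        List.append_nil] at hD
    have hA := Tasc m (q+1) HR q 1 (by omega)
    rw [List.append_assoc, List.append_assoc, List.append_assoc,
        show Ew (q + 2 + 1) = Ew (1 + q) from Ew_eq_Ew _ _ (by omega),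
        hA, hD,
        Dw_succ_back, show q + 1 - q = 1 by omega, zsw_one,
        Aw_succ_front, zsw_one,
        show Ew (q+2) = Ew q from Ew_add_two q, hphiL]
    simp [Ew, List.append_assoc]
  rcases Nat.eq_or_lt_of_le hjm with hjm' | hjm'
  · -- j = m
    subst hjm'
    rw [zsw_small m m (by omega) le_rfl, zsw_big m (m+1) hm (by omega),
        show m + 1 - m - 1 = 0 by omega, show m + 1 - m + 1 = 2 by omega,
        show m + 1 - m = 1 by omega, show m + 1 - 2 = m - 1 by omega,
        zsw_one, zsw_zero,
        phiW_append, phiW_append, phiW_singleton]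
    have hphiL : phiL m (m-1) = [0] := by simp [phiL]
    have hD := Tdesc m (m-1) HR (m-2) (m-2) (by omega) (by omega)
    rw [show m - 2 + 2 - (m-2) = 2 by omega, show Ew 2 = [] by simp [Ew],
        List.append_nil] at hD
    have hA := Tasc m (m-1) HR (m-2) 1 (by omega)
    rw [List.append_assoc, List.append_assoc, List.append_assoc,
        show Ew (m + 1) = Ew (1 + (m-2)) from Ew_eq_Ew _ _ (by omega),
        hA, hD,
        show m - 2 + 1 = m - 1 by omega, hphiL,
        show Ew (m-2) = Ew m from Ew_eq_Ew _ _ (by omega)]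
    simp [Ew, List.append_assoc]
  · -- j ≥ m + 1 : both big
    obtain ⟨p, hp⟩ : ∃ p, m = p + 2 := ⟨m - 2, by omega⟩
    obtain ⟨t, rfl⟩ : ∃ t, j = m + 1 + t := ⟨j - m - 1, by omega⟩
    have HR' : ∀ t' ≤ m + t, phiW m (zsw m t') ++ Ew (t'+1) = Ew t' ++ zsw m (t'+1) :=
      fun t' h => HR t' (by omega)
    rw [zsw_big m (m + 1 + t) hm (by omega), zsw_big m (m + 1 + t + 1) hm (by omega),
        show m + 1 + t - m - 1 = t by omega,
        show m + 1 + t - m + 1 = t + 2 by omega,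
        show m + 1 + t - m = t + 1 by omega,
        show m + 1 + t - 2 = p + t + 1 by omega,
        show m + 1 + t + 1 - m - 1 = t + 1 by omega,
        show m + 1 + t + 1 - m + 1 = t + 3 by omega,
        show m + 1 + t + 1 - m = t + 2 by omega,
        show m + 1 + t + 1 - 2 = p + t + 2 by omega,
        show m - 2 = p by omega,
        phiW_append, phiW_append, phiW_append, phiW_append]
    have hA : phiW m (Aw m p (t + 2)) ++ Ew (m+1+t+1) = Ew (t + 2) ++ Aw m p (t + 3) := by
      have h := Tasc m (m+t) HR' p (t+2) (by omega)
      rw [show Ew (m+1+t+1) = Ew (t+2+p) from Ew_eq_Ew _ _ (by omega),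
          show (t+3 : ℕ) = t+2+1 by omega]
      exact h
    have h1 : ∀ rest : List ℕ, phiW m (zsw m (t+1)) ++ (Ew (t+2) ++ rest)
        = Ew (t+1) ++ (zsw m (t+2) ++ rest) := by
      intro rest
      rw [← List.append_assoc, ← List.append_assoc, show (t+2:ℕ) = t+1+1 by omega,
          HR' (t+1) (by omega)]
    have h2 : ∀ rest : List ℕ, phiW m (zsw m t) ++ (Ew (t+1) ++ rest)
        = Ew t ++ (zsw m (t+1) ++ rest) := by
      intro rest
      rw [← List.append_assoc, ← List.append_assoc, HR' t (by omega)]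
    have h3 : ∀ rest : List ℕ, phiW m (zsw m (t+1)) ++ (Ew t ++ rest)
        = Ew (t+1) ++ (zsw m (t+2) ++ rest) := by
      intro rest
      rw [show Ew t = Ew (t+2) from (Ew_add_two t).symm]
      exact h1 rest
    have h4 : ∀ rest : List ℕ, phiW m (Dw m p (p+t+1)) ++ (Ew (t+1) ++ rest)
        = Ew (m+1+t) ++ (Dw m p (p+t+2) ++ rest) := by
      intro rest
      have hD := Tdesc m (m+t) HR' p (p+t+1) (by omega) (by omega)
      rw [show p+t+1+2-p = t+3 by omega, show p+t+1+1 = p+t+2 by omega] at hD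
      rw [show Ew (t+1) = Ew (t+3) from (Ew_add_two (t+1)).symm,
          ← List.append_assoc, ← List.append_assoc, hD,
          show Ew (p+t+1) = Ew (m+1+t) from Ew_eq_Ew _ _ (by omega)]
    simp only [List.append_assoc]
    rw [hA, h1, h2, h3, h4]

lemma hword_head (m : ℕ) : ∀ n, ∃ tl, hword m n = 0 :: tl := by
  intro n
  cases n with
  | zero => exact ⟨[], rfl⟩
  | succ n =>
    obtain ⟨tl, h⟩ := hword_head m n
    simp only [hword, h, phiW, List.flatMap_cons]
    by_cases h0 : (0 : ℕ) = m - 1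
    · exact ⟨tl.flatMap (phiL m), by simp [phiL, ← h0]⟩
    · exact ⟨1 :: tl.flatMap (phiL m), by simp [phiL, h0]⟩

lemma length_le_length_phiW (m : ℕ) (u : List ℕ) : u.length ≤ (phiW m u).length := by
  induction u with
  | nil => simp [phiW]
  | cons a u ih =>
    rw [show a :: u = [a] ++ u from rfl, phiW_append, List.length_append]
    have : 1 ≤ (phiW m [a]).length := by
      rw [phiW_singleton]
      simp only [phiL]
      by_cases h : a = m - 1 <;> simp [h]
    simpa using Nat.add_le_add this ih

lemma lt_length_hword (m : ℕ) (hm : 2 ≤ m) : ∀ n, n < (hword m n).length := by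
  intro n
  induction n with
  | zero => simp [hword]
  | succ n ih =>
    obtain ⟨tl, h⟩ := hword_head m n
    have h1 : hword m (n+1) = phiL m 0 ++ phiW m tl := by
      rw [hword, h, phiW, List.flatMap_cons]; rfl
    have h2 : phiL m 0 = [0, 1] := by simp only [phiL]; rw [if_neg (by omega)]
    have h3 : tl.length ≤ (phiW m tl).length := length_le_length_phiW m tl
    have h4 : (hword m n).length = tl.length + 1 := by rw [h]; simp
    rw [h1, h2, List.length_append]
    simp only [List.length_cons, List.length_singleton]
    omega

lemma hword_prefix_succ (m : ℕ) (hm : 2 ≤ m) (n : ℕ) :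
    hword m n <+: hword m (n+1) := by
  induction n with
  | zero =>
    have h2 : phiL m 0 = [0, 1] := by simp only [phiL]; rw [if_neg (by omega)]
    show hword m 0 <+: hword m 1
    have : hword m 1 = [0, 1] := by
      show phiW m [0] = [0,1]
      rw [phiW_singleton, h2]
    rw [this]
    exact ⟨[1], rfl⟩
  | succ n ih =>
    obtain ⟨t, ht⟩ := ih
    exact ⟨phiW m t, by rw [hword, hword, ← phiW_append, ht]⟩

lemma hword_prefix (m : ℕ) (hm : 2 ≤ m) {a b : ℕ} (h : a ≤ b) :
    hword m a <+: hword m b := by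
  induction b with
  | zero => simp_all
  | succ b ih =>
    rcases Nat.lt_or_ge a (b+1) with h' | h'
    · exact (ih (by omega)).trans (hword_prefix_succ m hm b)
    · have : a = b + 1 := by omega
      subst this; rfl

lemma prefix_getD {u v : List ℕ} (h : u <+: v) {i : ℕ} (hi : i < u.length) :
    v.getD i 0 = u.getD i 0 := by
  obtain ⟨t, rfl⟩ := h
  exact List.getD_append u t 0 i hi

lemma mbon_getD (m : ℕ) (hm : 2 ≤ m) (N i : ℕ) (h : i < (hword m N).length) :
    mbon m i = (hword m N).getD i 0 := by
  show (hword m (i+1)).getD i 0 = (hword m N).getD i 0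
  have hi : i < (hword m (i+1)).length := by
    have := lt_length_hword m hm (i+1); omega
  rcases le_total (i+1) N with hc | hc
  · rw [prefix_getD (hword_prefix m hm hc) hi]
  · rw [prefix_getD (hword_prefix m hm hc) h]

lemma infPrefix_of_prefix_hword (m : ℕ) (hm : 2 ≤ m) {u : List ℕ} {N : ℕ}
    (h : u <+: hword m N) : InfPrefix u (mbon m) := by
  intro i hi
  have hiN : i < (hword m N).length := lt_of_lt_of_le hi h.length_le
  rw [Nat.zero_add, mbon_getD m hm N i hiN, prefix_getD h hi]

lemma prefix_hword_of_infPrefix (m : ℕ) (hm : 2 ≤ m) {u : List ℕ}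
    (h : InfPrefix u (mbon m)) :
    u <+: hword m u.length ∧ u.length < (hword m u.length).length := by
  set N := u.length with hN
  have hlen : N < (hword m N).length := lt_length_hword m hm N
  have : u = (hword m N).take N := by
    apply List.ext_getElem
    · simp [List.length_take]; omega
    · intro i h1 h2
      have hiu : i < u.length := h1
      have hiN : i < (hword m N).length := by omega
      have := h i hiu
      rw [Nat.zero_add, mbon_getD m hm N i hiN] at this
      rw [List.getElem_take]
      rw [List.getD_eq_getElem u 0 hiu, List.getD_eq_getElem _ 0 hiN] at this
      exact this.symm
  constructor
  · rw [this]; exact List.take_prefix N _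
  · exact hlen

lemma infPrefix_step (m : ℕ) (hm : 2 ≤ m) {u : List ℕ}
    (h : InfPrefix u (mbon m)) : InfPrefix (phiW m u ++ [0]) (mbon m) := by
  obtain ⟨hpre, hlt⟩ := prefix_hword_of_infPrefix m hm h
  set N := u.length
  set a := (hword m N).getD N 0 with ha
  have htake : u ++ [a] <+: hword m N := by
    obtain ⟨t, ht⟩ := hpre
    have htne : t ≠ [] := by
      intro hte
      rw [hte, List.append_nil] at ht
      rw [← ht] at hlt
      omega
    obtain ⟨b, t', rfl⟩ := List.exists_cons_of_ne_nil htne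
    have hb : b = a := by
      rw [ha, ← ht, List.getD_append_right u (b :: t') 0 N (le_refl _)]
      simp [N]
    exact ⟨t', by rw [← ht, hb]; simp⟩
  have hphi : phiW m (u ++ [a]) <+: hword m (N+1) := by
    obtain ⟨t, ht⟩ := htake
    exact ⟨phiW m t, by rw [hword, ← ht, phiW_append, phiW_append, phiW_append]⟩
  have h0a : [0] <+: phiL m a := by
    simp only [phiL]
    by_cases hc : a = m - 1
    · rw [if_pos hc]
    · rw [if_neg hc]; exact ⟨[a+1], rfl⟩
  have : phiW m u ++ [0] <+: hword m (N+1) := by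
    refine List.IsPrefix.trans ?_ hphi
    rw [phiW_append, phiW_singleton]
    obtain ⟨s, hs⟩ := h0a
    exact ⟨s, by rw [List.append_assoc, hs]⟩
  exact infPrefix_of_prefix_hword m hm this

lemma infPrefix_mono (m : ℕ) {u v : List ℕ} {w : ℕ → ℕ}
    (huv : u <+: v) (h : InfPrefix v w) : InfPrefix u w := by
  intro i hi
  rw [h i (lt_of_lt_of_le hi huv.length_le), prefix_getD huv hi]

lemma zsw_length_pos (m : ℕ) (hm : 2 ≤ m) : ∀ k, 1 ≤ k → 1 ≤ (zsw m k).length := by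
  intro k
  induction k using Nat.strong_induction_on with
  | _ k IH =>
  intro hk
  rcases Nat.lt_or_ge k 2 with h2 | h2
  · have : k = 1 := by omega
    subst this; simp [zsw_one]
  rcases le_or_gt k m with hkm | hkm
  · rw [zsw_small m k h2 hkm]
    simp only [List.length_append, List.length_cons, List.length_nil]
    omega
  · rw [zsw_big m k hm hkm]
    have h1 : 1 ≤ (zsw m (k - m)).length := IH (k - m) (by omega) (by omega)
    simp only [List.length_append]
    omega

lemma sword_eq_Aw (m n : ℕ) :
    ((List.range n).map (fun k => zsw m (k + 1))).flatten = Aw m n 1 := by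
  simp only [Aw]
  congr 1
  apply List.map_congr_left
  intro j _
  rw [Nat.add_comm]

lemma sword_succ_eq (m : ℕ) (hm : 2 ≤ m) (n : ℕ) :
    ((List.range (n+1)).map (fun k => zsw m (k + 1))).flatten
      = phiW m (((List.range n).map (fun k => zsw m (k + 1))).flatten) ++ Ew (n+1) := by
  rw [sword_eq_Aw, sword_eq_Aw]
  have hA := Tasc m n (fun t _ => Rkey m hm t) n 1 (by omega)
  rw [show (1 + n : ℕ) = n + 1 by omega] at hA
  rw [Aw_succ_front, zsw_one, show ([0] : List ℕ) = Ew 1 from rfl, ← hA]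

/-- The `m`-bonacci word factors as the concatenation of all p-singular words:
`w_m = z₀ z₁ z₂ ⋯`. That is, for every `n ≥ 0` the word `z₀ z₁ ⋯ z_{n-1}` is a prefix
of `w_m`, and the lengths `|z₀ z₁ ⋯ z_{n-1}|` tend to infinity. -/
theorem mbon_psingular_factorization (m : ℕ) (hm : 2 ≤ m) :
    (∀ n, InfPrefix (((List.range n).map (fun k => zsw m (k + 1))).flatten) (mbon m)) ∧
    (∀ N, ∃ n, N ≤ ((((List.range n).map (fun k => zsw m (k + 1))).flatten)).length) := by
  constructor
  · intro n
    induction n with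
    | zero =>
      intro i hi
      simp at hi
    | succ n ih =>
      rw [sword_succ_eq m hm n]
      have hstep := infPrefix_step m hm ih
      have hEw : Ew (n+1) <+: [0] := by
        simp only [Ew]
        by_cases hc : (n+1) % 2 = 1
        · rw [if_pos hc]
        · rw [if_neg hc]; exact ⟨[0], rfl⟩
      refine infPrefix_mono m ?_ hstep
      obtain ⟨s, hs⟩ := hEw
      exact ⟨s, by rw [List.append_assoc, hs]⟩
  · intro N
    refine ⟨N, ?_⟩
    induction N with
    | zero => simp
    | succ N ih =>
      rw [List.range_succ, List.map_append, List.flatten_append, List.length_append]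
      have := zsw_length_pos m hm (N+1) (by omega)
      simp only [List.map_cons, List.map_nil, List.flatten_cons, List.flatten_nil,
        List.append_nil]
      omega
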